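/- Let m, n ≥ 0 and let λ be any partition. Then in ℤ[x_1,…,x_m,y_1,…,y_n] one has hs_λ(x; y) = Σ_{μ ⊆ λ} s_μ(x_1,…,x_m) · s_{λ'/μ'}(y_1,…,y_n), where the sum is over all partitions μ contained in λ, λ' and μ' denote the conjugate (transposed) partitions, s_μ is the Schur polynomial in m variables, and s_{λ'/μ'} is the skew Schur polynomial in n variables. -/

import Mathlib

noncomputable section

open scoped Classical

namespace Stmt5

/-- Position of a letter in the totally ordered alphabet
`1̄ < ⋯ < m̄ < 1 < ⋯ < n` (barred letters `Sum.inl`, unbarred letters `Sum.inr`). -/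
def code (m n : ℕ) : Fin m ⊕ Fin n → ℕ
  | Sum.inl a => (a : ℕ)
  | Sum.inr b => m + (b : ℕ)

/-- A hook tableau of shape `μ`: entries weakly increase along rows and columns,
barred entries strictly increase down columns, unbarred entries strictly increase
along rows. Cells `(i, j)` have row index `i` and column index `j`. -/
def IsHookTableau (m n : ℕ) (μ : YoungDiagram)
    (f : {c // c ∈ μ.cells} → Fin m ⊕ Fin n) : Prop :=
  (∀ c c' : {c // c ∈ μ.cells},
      (c : ℕ × ℕ).1 = (c' : ℕ × ℕ).1 → (c : ℕ × ℕ).2 ≤ (c' : ℕ × ℕ).2 →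
      code m n (f c) ≤ code m n (f c')) ∧
  (∀ c c' : {c // c ∈ μ.cells},
      (c : ℕ × ℕ).2 = (c' : ℕ × ℕ).2 → (c : ℕ × ℕ).1 ≤ (c' : ℕ × ℕ).1 →
      code m n (f c) ≤ code m n (f c')) ∧
  (∀ c c' : {c // c ∈ μ.cells},
      (c : ℕ × ℕ).2 = (c' : ℕ × ℕ).2 → (c : ℕ × ℕ).1 < (c' : ℕ × ℕ).1 →
      (f c).isLeft → (f c').isLeft → code m n (f c) < code m n (f c')) ∧
  (∀ c c' : {c // c ∈ μ.cells},
      (c : ℕ × ℕ).1 = (c' : ℕ × ℕ).1 → (c : ℕ × ℕ).2 < (c' : ℕ × ℕ).2 →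
      (f c).isRight → (f c').isRight → code m n (f c) < code m n (f c'))

/-- The (finite) set of hook tableaux of shape `μ`. -/
def hookTableaux (m n : ℕ) (μ : YoungDiagram) :
    Finset ({c // c ∈ μ.cells} → Fin m ⊕ Fin n) :=
  Finset.univ.filter (IsHookTableau m n μ)

/-- The hook Schur polynomial `hs_μ(x_1,…,x_m; y_1,…,y_n)`: the generating function
of hook tableaux of shape `μ`, with `x_a = X (Sum.inl a)` and `y_b = X (Sum.inr b)`. -/
def hookSchur (m n : ℕ) (μ : YoungDiagram) : MvPolynomial (Fin m ⊕ Fin n) ℤ :=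
  ∑ f ∈ hookTableaux m n μ, ∏ c, MvPolynomial.X (f c)

/-- Semistandardness of a filling of a (skew) set of cells by entries in `Fin N`:
rows weakly increase, columns strictly increase. -/
def IsSemistandard {N : ℕ} (cs : Finset (ℕ × ℕ)) (f : {c // c ∈ cs} → Fin N) : Prop :=
  (∀ c c' : {c // c ∈ cs},
      (c : ℕ × ℕ).1 = (c' : ℕ × ℕ).1 → (c : ℕ × ℕ).2 ≤ (c' : ℕ × ℕ).2 → f c ≤ f c') ∧
  (∀ c c' : {c // c ∈ cs},
      (c : ℕ × ℕ).2 = (c' : ℕ × ℕ).2 → (c : ℕ × ℕ).1 < (c' : ℕ × ℕ).1 → f c < f c')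

/-- Generating function of semistandard fillings of a set of cells in `N` variables. -/
def genSchur (N : ℕ) (cs : Finset (ℕ × ℕ)) : MvPolynomial (Fin N) ℤ :=
  ∑ f ∈ Finset.univ.filter (IsSemistandard (N := N) cs), ∏ c, MvPolynomial.X (f c)

/-- The Schur polynomial `s_μ(z_1,…,z_N)`. -/
def schurPoly (N : ℕ) (μ : YoungDiagram) : MvPolynomial (Fin N) ℤ :=
  genSchur N μ.cells

/-- The skew Schur polynomial `s_{θ/κ}(z_1,…,z_N)`. -/
def skewSchur (N : ℕ) (θ κ : YoungDiagram) : MvPolynomial (Fin N) ℤ :=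
  genSchur N (θ.cells \ κ.cells)

/-- The Young diagram of a partition of `d`. -/
def toYoung {d : ℕ} (p : Nat.Partition d) : YoungDiagram :=
  YoungDiagram.ofRowLens (p.parts.sort (· ≥ ·)) (Multiset.pairwise_sort _ _).sortedGE

lemma code_lt_iff {m n : ℕ} (x : Fin m ⊕ Fin n) : code m n x < m ↔ x.isLeft := by
  cases x with
  | inl a => simpa [code] using a.2
  | inr b => simp [code]

lemma code_inl {m n : ℕ} (a : Fin m) : code m n (Sum.inl a) = a := rfl
lemma code_inr {m n : ℕ} (b : Fin n) : code m n (Sum.inr b) = m + b := rfl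

/-- card of a Young diagram equals the sum of its row lengths -/
lemma card_eq_sum_rowLens (μ : YoungDiagram) : μ.card = μ.rowLens.sum := by
  have h1 : μ.card = ∑ i ∈ Finset.range (μ.colLen 0), (μ.cells.filter (fun c => c.1 = i)).card := by
    apply Finset.card_eq_sum_card_fiberwise
    intro c hc
    rw [Finset.mem_coe, Finset.mem_range, ← YoungDiagram.mem_iff_lt_colLen]
    exact μ.up_left_mem le_rfl (Nat.zero_le _) (by rwa [Finset.mem_coe, YoungDiagram.mem_cells] at hc; )
  have h2 : μ.rowLens.sum = ∑ i ∈ Finset.range (μ.colLen 0), μ.rowLen i := rfl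
  rw [h1, h2]
  apply Finset.sum_congr rfl
  intro i _
  rw [YoungDiagram.rowLen_eq_card]
  rfl


/-- the partition associated to a Young diagram -/
def partitionOf (μ : YoungDiagram) : Nat.Partition μ.card where
  parts := ↑μ.rowLens
  parts_pos := fun hi => μ.pos_of_mem_rowLens _ hi
  parts_sum := by rw [Multiset.sum_coe, ← card_eq_sum_rowLens]

lemma ofRowLens_congr {w w' : List ℕ} (hw : w.SortedGE) (hw' : w'.SortedGE)
    (h : w = w') : YoungDiagram.ofRowLens w hw = YoungDiagram.ofRowLens w' hw' := by
  subst h; rfl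

lemma sort_coe_eq {l : List ℕ} (h : l.SortedGE) : Multiset.sort (↑l) (· ≥ ·) = l :=
  List.Perm.eq_of_sortedGE (Multiset.pairwise_sort _ _).sortedGE h
    (Multiset.coe_eq_coe.mp (Multiset.sort_eq _ _))

lemma toYoung_partitionOf (μ : YoungDiagram) : toYoung (partitionOf μ) = μ := by
  exact (ofRowLens_congr _ μ.rowLens_sorted (sort_coe_eq μ.rowLens_sorted)).trans
    YoungDiagram.ofRowLens_to_rowLens_eq_self

lemma rowLens_toYoung {d : ℕ} (p : Nat.Partition d) :
    (toYoung p).rowLens = p.parts.sort (· ≥ ·) :=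
  YoungDiagram.rowLens_ofRowLens_eq_self (fun x hx => p.parts_pos (by
    rwa [← Multiset.mem_sort (· ≥ ·)] ))

lemma card_toYoung {d : ℕ} (p : Nat.Partition d) : (toYoung p).card = d := by
  rw [card_eq_sum_rowLens, rowLens_toYoung, ← Multiset.sum_coe, Multiset.sort_eq, p.parts_sum]

lemma parts_partitionOf_toYoung {d : ℕ} (p : Nat.Partition d) :
    (partitionOf (toYoung p)).parts = p.parts := by
  show (↑(toYoung p).rowLens : Multiset ℕ) = p.parts
  rw [rowLens_toYoung, Multiset.sort_eq]

lemma sigma_partition_ext {k₁ k₂ : ℕ} {p₁ : Nat.Partition k₁} {p₂ : Nat.Partition k₂}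
    (h : p₁.parts = p₂.parts) : (⟨k₁, p₁⟩ : Σ k, Nat.Partition k) = ⟨k₂, p₂⟩ := by
  have hk : k₁ = k₂ := by rw [← p₁.parts_sum, ← p₂.parts_sum, h]
  subst hk
  exact congrArg _ (Nat.Partition.ext h)



variable (m n : ℕ) (lam : YoungDiagram)

/-- The set of barred cells of a filling. -/
def barred (f : {c // c ∈ lam.cells} → Fin m ⊕ Fin n) : Finset (ℕ × ℕ) :=
  lam.cells.filter fun c => ∀ hc : c ∈ lam.cells, (f ⟨c, hc⟩).isLeft

lemma barred_subset (f : {c // c ∈ lam.cells} → Fin m ⊕ Fin n) :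
    barred m n lam f ⊆ lam.cells := Finset.filter_subset _ _

lemma isLeft_of_mem_barred {f : {c // c ∈ lam.cells} → Fin m ⊕ Fin n} {c : ℕ × ℕ}
    (h : c ∈ barred m n lam f) (hc : c ∈ lam.cells) : (f ⟨c, hc⟩).isLeft :=
  (Finset.mem_filter.mp h).2 hc

lemma mem_barred' {f : {c // c ∈ lam.cells} → Fin m ⊕ Fin n} (c : {c // c ∈ lam.cells}) :
    (c : ℕ × ℕ) ∈ barred m n lam f ↔ (f c).isLeft := by
  constructor
  · intro h
    have := isLeft_of_mem_barred m n lam h c.2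
    rwa [Subtype.coe_eta] at this
  · intro h
    refine Finset.mem_filter.mpr ⟨c.2, fun hc => ?_⟩
    rwa [Subtype.coe_eta]

lemma isRight_of_not_mem_barred {f : {c // c ∈ lam.cells} → Fin m ⊕ Fin n}
    (c : {c // c ∈ lam.cells}) (hb : (c : ℕ × ℕ) ∉ barred m n lam f) : (f c).isRight := by
  rw [← Sum.not_isLeft]
  exact fun h => hb ((mem_barred' m n lam c).mpr h)

lemma barred_lower {f : {c // c ∈ lam.cells} → Fin m ⊕ Fin n}
    (hf : IsHookTableau m n lam f) :
    IsLowerSet (↑(barred m n lam f) : Set (ℕ × ℕ)) := by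
  intro a b hle hb
  simp only [Finset.mem_coe] at hb ⊢
  have halam : a ∈ lam.cells := barred_subset m n lam f hb
  have hmidlam : (b.1, a.2) ∈ lam.cells := by
    rw [YoungDiagram.mem_cells] at halam ⊢
    exact lam.up_left_mem hle.1 le_rfl (by simpa using halam)
  have hblam : b ∈ lam.cells := by
    rw [YoungDiagram.mem_cells] at hmidlam ⊢
    exact lam.up_left_mem le_rfl hle.2 (by simpa using hmidlam)
  set A : {c // c ∈ lam.cells} := ⟨a, halam⟩
  set M : {c // c ∈ lam.cells} := ⟨(b.1, a.2), hmidlam⟩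
  set B : {c // c ∈ lam.cells} := ⟨b, hblam⟩
  have hA : (f A).isLeft := by
    have := (mem_barred' m n lam A).mp (by simpa [A] using hb)
    exact this
  have hM : (f M).isLeft := by
    rw [← code_lt_iff]
    calc code m n (f M) ≤ code m n (f A) := hf.2.1 M A rfl hle.1
    _ < m := by rw [code_lt_iff]; exact hA
  have hB : (f B).isLeft := by
    rw [← code_lt_iff]
    calc code m n (f B) ≤ code m n (f M) := hf.1 B M rfl hle.2
    _ < m := by rw [code_lt_iff]; exact hM
  exact (mem_barred' m n lam B).mpr hB

/-- The Young diagram of barred cells of a hook tableau. -/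
def muD {f : {c // c ∈ lam.cells} → Fin m ⊕ Fin n} (hf : IsHookTableau m n lam f) :
    YoungDiagram := ⟨barred m n lam f, barred_lower m n lam hf⟩

lemma mem_barred_of_mem_mu {f : {c // c ∈ lam.cells} → Fin m ⊕ Fin n}
    (hf : IsHookTableau m n lam f) {c : ℕ × ℕ}
    (h : c ∈ (toYoung (partitionOf (muD m n lam hf))).cells) : c ∈ barred m n lam f := by
  rwa [toYoung_partitionOf] at h

lemma mem_skew_iff {μ : YoungDiagram} {c : ℕ × ℕ} :
    c ∈ lam.transpose.cells \ μ.transpose.cells ↔ c.swap ∈ lam.cells ∧ c.swap ∉ μ.cells := by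
  simp [Finset.mem_sdiff, YoungDiagram.mem_cells, YoungDiagram.mem_transpose]

lemma mem_mu_of_mem_barred {f : {c // c ∈ lam.cells} → Fin m ⊕ Fin n}
    (hf : IsHookTableau m n lam f) {c : ℕ × ℕ} (h : c ∈ barred m n lam f) :
    c ∈ (toYoung (partitionOf (muD m n lam hf))).cells := by
  rw [toYoung_partitionOf]; exact h

/-- forward map : the barred subtableau. -/
def gOf {f : {c // c ∈ lam.cells} → Fin m ⊕ Fin n} (hf : IsHookTableau m n lam f) :
    {c // c ∈ (toYoung (partitionOf (muD m n lam hf))).cells} → Fin m := fun c =>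
  Sum.getLeft (f ⟨c.1, barred_subset m n lam f (mem_barred_of_mem_mu m n lam hf c.2)⟩)
    (isLeft_of_mem_barred m n lam (mem_barred_of_mem_mu m n lam hf c.2)
      (barred_subset m n lam f (mem_barred_of_mem_mu m n lam hf c.2)))

/-- forward map : the unbarred subtableau, transposed. -/
def hOf {f : {c // c ∈ lam.cells} → Fin m ⊕ Fin n} (hf : IsHookTableau m n lam f) :
    {c // c ∈ lam.transpose.cells \ (toYoung (partitionOf (muD m n lam hf))).transpose.cells} →
      Fin n := fun c =>
  Sum.getRight (f ⟨c.1.swap, ((mem_skew_iff lam).mp c.2).1⟩)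
    (isRight_of_not_mem_barred m n lam ⟨c.1.swap, ((mem_skew_iff lam).mp c.2).1⟩
      (fun hmem => ((mem_skew_iff lam).mp c.2).2 (mem_mu_of_mem_barred m n lam hf hmem)))


lemma code_getLeft {x : Fin m ⊕ Fin n} (h : x.isLeft) :
    ((x.getLeft h : Fin m) : ℕ) = code m n x := by
  cases x with
  | inl a => rfl
  | inr b => simp at h

lemma code_getRight {x : Fin m ⊕ Fin n} (h : x.isRight) :
    m + ((x.getRight h : Fin n) : ℕ) = code m n x := by
  cases x with
  | inl a => simp at h
  | inr b => rfl

lemma gOf_semistandard {f : {c // c ∈ lam.cells} → Fin m ⊕ Fin n}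
    (hf : IsHookTableau m n lam f) :
    IsSemistandard (toYoung (partitionOf (muD m n lam hf))).cells (gOf m n lam hf) := by
  constructor
  · intro c c' h1 h2
    rw [Fin.le_def]
    unfold gOf
    rw [code_getLeft, code_getLeft]
    exact hf.1 _ _ h1 h2
  · intro c c' h1 h2
    rw [Fin.lt_def]
    unfold gOf
    rw [code_getLeft, code_getLeft]
    exact hf.2.2.1 _ _ h1 h2
      (isLeft_of_mem_barred m n lam (mem_barred_of_mem_mu m n lam hf c.2) _)
      (isLeft_of_mem_barred m n lam (mem_barred_of_mem_mu m n lam hf c'.2) _)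

lemma hOf_semistandard {f : {c // c ∈ lam.cells} → Fin m ⊕ Fin n}
    (hf : IsHookTableau m n lam f) :
    IsSemistandard
      (lam.transpose.cells \ (toYoung (partitionOf (muD m n lam hf))).transpose.cells)
      (hOf m n lam hf) := by
  constructor
  · intro c c' h1 h2
    rw [Fin.le_def, ← Nat.add_le_add_iff_left (n := m)]
    unfold hOf
    rw [code_getRight, code_getRight]
    exact hf.2.1 _ _ (by simp [Prod.swap, h1]) (by simpa [Prod.swap] using h2)
  · intro c c' h1 h2
    rw [Fin.lt_def, ← Nat.add_lt_add_iff_left (k := m)]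
    unfold hOf
    rw [code_getRight, code_getRight]
    refine hf.2.2.2 _ _ (by simp [Prod.swap, h1]) (by simpa [Prod.swap] using h2) ?_ ?_
    · exact isRight_of_not_mem_barred m n lam _
        (fun hmem => ((mem_skew_iff lam).mp c.2).2 (mem_mu_of_mem_barred m n lam hf hmem))
    · exact isRight_of_not_mem_barred m n lam _
        (fun hmem => ((mem_skew_iff lam).mp c'.2).2 (mem_mu_of_mem_barred m n lam hf hmem))


lemma lower_mem {μ : YoungDiagram} {a b : ℕ × ℕ} (h1 : a.1 ≤ b.1) (h2 : a.2 ≤ b.2)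
    (hb : b ∈ μ.cells) : a ∈ μ.cells := by
  rw [YoungDiagram.mem_cells] at hb ⊢
  have : ((a.1, a.2) : ℕ × ℕ) ∈ μ := μ.up_left_mem h1 h2 (by simpa using hb)
  simpa using this

lemma mem_skew_of {μ : YoungDiagram} {c : ℕ × ℕ} (h1 : c ∈ lam.cells) (h2 : c ∉ μ.cells) :
    c.swap ∈ lam.transpose.cells \ μ.transpose.cells := by
  rw [mem_skew_iff]
  simpa using ⟨h1, h2⟩

/-- The backward map: reassembling a hook tableau from a pair of tableaux. -/
def psiF (q : Σ k, Nat.Partition k) (g : {c // c ∈ (toYoung q.2).cells} → Fin m)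
    (h : {c // c ∈ lam.transpose.cells \ (toYoung q.2).transpose.cells} → Fin n) :
    {c // c ∈ lam.cells} → Fin m ⊕ Fin n := fun c =>
  if hc : c.1 ∈ (toYoung q.2).cells then Sum.inl (g ⟨c.1, hc⟩)
  else Sum.inr (h ⟨c.1.swap, mem_skew_of lam c.2 hc⟩)

lemma psiF_eq_inl {q : Σ k, Nat.Partition k} {g} {h} (c : {c // c ∈ lam.cells})
    (hc : c.1 ∈ (toYoung q.2).cells) :
    psiF m n lam q g h c = Sum.inl (g ⟨c.1, hc⟩) := dif_pos hc

lemma psiF_eq_inr {q : Σ k, Nat.Partition k} {g} {h} (c : {c // c ∈ lam.cells})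
    (hc : c.1 ∉ (toYoung q.2).cells) :
    psiF m n lam q g h c = Sum.inr (h ⟨c.1.swap, mem_skew_of lam c.2 hc⟩) := dif_neg hc

lemma psiF_isLeft_iff {q : Σ k, Nat.Partition k} {g} {h} (c : {c // c ∈ lam.cells}) :
    (psiF m n lam q g h c).isLeft ↔ c.1 ∈ (toYoung q.2).cells := by
  by_cases hc : c.1 ∈ (toYoung q.2).cells
  · rw [psiF_eq_inl m n lam c hc]; simpa using hc
  · rw [psiF_eq_inr m n lam c hc]; simpa using hc

lemma psiF_isHook {q : Σ k, Nat.Partition k} {g} {h}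
    (hg : IsSemistandard (toYoung q.2).cells g)
    (hh : IsSemistandard (lam.transpose.cells \ (toYoung q.2).transpose.cells) h) :
    IsHookTableau m n lam (psiF m n lam q g h) := by
  have key_left : ∀ (c : {c // c ∈ lam.cells}) (hc : c.1 ∈ (toYoung q.2).cells),
      code m n (psiF m n lam q g h c) = (g ⟨c.1, hc⟩ : ℕ) := by
    intro c hc; rw [psiF_eq_inl m n lam c hc, code_inl]
  have key_right : ∀ (c : {c // c ∈ lam.cells}) (hc : c.1 ∉ (toYoung q.2).cells),
      code m n (psiF m n lam q g h c) = m + (h ⟨c.1.swap, mem_skew_of lam c.2 hc⟩ : ℕ) := by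
    intro c hc; rw [psiF_eq_inr m n lam c hc, code_inr]
  have hmono : ∀ (c c' : {c // c ∈ lam.cells}), c.1.1 ≤ c'.1.1 → c.1.2 ≤ c'.1.2 →
      c'.1 ∈ (toYoung q.2).cells → c.1 ∈ (toYoung q.2).cells :=
    fun c c' h1 h2 hc' => lower_mem h1 h2 hc'
  refine ⟨?_, ?_, ?_, ?_⟩
  · -- rows weakly increase
    intro c c' h1 h2
    by_cases hc' : c'.1 ∈ (toYoung q.2).cells
    · have hc : c.1 ∈ (toYoung q.2).cells := hmono c c' h1.le h2 hc'
      rw [key_left c hc, key_left c' hc']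
      exact hg.1 ⟨c.1, hc⟩ ⟨c'.1, hc'⟩ h1 h2
    · by_cases hc : c.1 ∈ (toYoung q.2).cells
      · rw [key_left c hc, key_right c' hc']
        exact le_trans (le_of_lt (g ⟨c.1, hc⟩).2) (Nat.le_add_right m _)
      · rcases Nat.lt_or_ge c.1.2 c'.1.2 with hlt | hge
        · rw [key_right c hc, key_right c' hc']
          exact Nat.add_le_add_left (le_of_lt (hh.2 _ _ (by simp [Prod.swap, h1])
            (by simpa [Prod.swap] using hlt))) m
        · have hcc : c = c' := Subtype.ext (Prod.ext h1 (le_antisymm h2 hge))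
          subst hcc; exact le_rfl
  · -- columns weakly increase
    intro c c' h1 h2
    by_cases hc' : c'.1 ∈ (toYoung q.2).cells
    · have hc : c.1 ∈ (toYoung q.2).cells := hmono c c' h2 h1.le hc'
      rcases Nat.lt_or_ge c.1.1 c'.1.1 with hlt | hge
      · rw [key_left c hc, key_left c' hc']
        exact_mod_cast le_of_lt (hg.2 ⟨c.1, hc⟩ ⟨c'.1, hc'⟩ h1 hlt)
      · have hcc : c = c' := Subtype.ext (Prod.ext (le_antisymm h2 hge) h1)
        subst hcc; exact le_rfl
    · by_cases hc : c.1 ∈ (toYoung q.2).cells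
      · rw [key_left c hc, key_right c' hc']
        exact le_trans (le_of_lt (g ⟨c.1, hc⟩).2) (Nat.le_add_right m _)
      · rw [key_right c hc, key_right c' hc']
        exact Nat.add_le_add_left (hh.1 _ _ (by simp [Prod.swap, h1])
          (by simpa [Prod.swap] using h2)) m
  · -- barred strictly increase down columns
    intro c c' h1 h2 hl hl'
    rw [psiF_isLeft_iff] at hl hl'
    rw [key_left c hl, key_left c' hl']
    exact_mod_cast hg.2 ⟨c.1, hl⟩ ⟨c'.1, hl'⟩ h1 h2
  · -- unbarred strictly increase along rows
    intro c c' h1 h2 hr hr'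
    have hl : c.1 ∉ (toYoung q.2).cells := by
      rw [← psiF_isLeft_iff m n lam (g := g) (h := h), Sum.not_isLeft]; exact hr
    have hl' : c'.1 ∉ (toYoung q.2).cells := by
      rw [← psiF_isLeft_iff m n lam (g := g) (h := h), Sum.not_isLeft]; exact hr'
    rw [key_right c hl, key_right c' hl']
    exact Nat.add_lt_add_left (hh.2 _ _ (by simp [Prod.swap, h1])
      (by simpa [Prod.swap] using h2)) m


/-- `BigT` : the index type for the right-hand side. -/
abbrev BigT (m n : ℕ) (lam : YoungDiagram) : Type :=
  Σ _q : Σ k, Nat.Partition k,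
    ({c // c ∈ (toYoung (Sigma.snd _q)).cells} → Fin m) ×
    ({c // c ∈ lam.transpose.cells \ (toYoung (Sigma.snd _q)).transpose.cells} → Fin n)

def BigS : Finset (BigT m n lam) :=
  Finset.sigma
    (Finset.sigma (Finset.range (lam.card + 1))
      (fun k => Finset.univ.filter (fun p : Nat.Partition k => (toYoung p).cells ⊆ lam.cells)))
    (fun q => (Finset.univ.filter (IsSemistandard (toYoung q.2).cells)) ×ˢ
      (Finset.univ.filter
        (IsSemistandard (lam.transpose.cells \ (toYoung q.2).transpose.cells))))

def phiF {f : {c // c ∈ lam.cells} → Fin m ⊕ Fin n} (hf : IsHookTableau m n lam f) :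
    BigT m n lam :=
  ⟨⟨(muD m n lam hf).card, partitionOf (muD m n lam hf)⟩,
    gOf m n lam hf, hOf m n lam hf⟩

lemma phiF_mem {f : {c // c ∈ lam.cells} → Fin m ⊕ Fin n} (hf : IsHookTableau m n lam f) :
    phiF m n lam hf ∈ BigS m n lam := by
  refine Finset.mem_sigma.mpr ⟨Finset.mem_sigma.mpr ⟨?_, ?_⟩,
    Finset.mem_product.mpr ⟨?_, ?_⟩⟩
  · exact Finset.mem_range.mpr (Nat.lt_succ_of_le
      (Finset.card_le_card (barred_subset m n lam f)))
  · refine Finset.mem_filter.mpr ⟨Finset.mem_univ _, ?_⟩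
    show (toYoung (partitionOf (muD m n lam hf))).cells ⊆ lam.cells
    rw [toYoung_partitionOf]
    exact barred_subset m n lam f
  · exact Finset.mem_filter.mpr ⟨Finset.mem_univ _, gOf_semistandard m n lam hf⟩
  · exact Finset.mem_filter.mpr ⟨Finset.mem_univ _, hOf_semistandard m n lam hf⟩

lemma psiF_phiF {f : {c // c ∈ lam.cells} → Fin m ⊕ Fin n} (hf : IsHookTableau m n lam f) :
    psiF m n lam ⟨(muD m n lam hf).card, partitionOf (muD m n lam hf)⟩
      (gOf m n lam hf) (hOf m n lam hf) = f := by
  funext c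
  by_cases hc : c.1 ∈ (toYoung (partitionOf (muD m n lam hf))).cells
  · rw [psiF_eq_inl m n lam c hc]
    exact (Sum.inl_getLeft _ _).trans (congrArg f (Subtype.coe_eta c _))
  · rw [psiF_eq_inr m n lam c hc]
    exact (Sum.inr_getRight _ _).trans (congrArg f (Subtype.ext (Prod.swap_swap c.1)))

lemma barred_psiF {q : Σ k, Nat.Partition k} {g} {h}
    (hsub : (toYoung q.2).cells ⊆ lam.cells) :
    barred m n lam (psiF m n lam q g h) = (toYoung q.2).cells := by
  ext c
  simp only [barred, Finset.mem_filter]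
  constructor
  · rintro ⟨hcl, hl⟩
    exact (psiF_isLeft_iff m n lam ⟨c, hcl⟩).mp (hl hcl)
  · intro hc
    exact ⟨hsub hc, fun hcl => (psiF_isLeft_iff m n lam ⟨c, hcl⟩).mpr hc⟩

lemma muD_psiF {q : Σ k, Nat.Partition k} {g} {h}
    (hsub : (toYoung q.2).cells ⊆ lam.cells)
    (hg : IsSemistandard (toYoung q.2).cells g)
    (hh : IsSemistandard (lam.transpose.cells \ (toYoung q.2).transpose.cells) h) :
    muD m n lam (psiF_isHook m n lam hg hh) = toYoung q.2 :=
  YoungDiagram.ext (barred_psiF m n lam hsub)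

lemma bigT_ext {b₁ b₂ : BigT m n lam} (hparts : b₁.1.2.parts = b₂.1.2.parts)
    (hg : ∀ (c : ℕ × ℕ) (hc1 : c ∈ (toYoung b₁.1.2).cells)
      (hc2 : c ∈ (toYoung b₂.1.2).cells), b₁.2.1 ⟨c, hc1⟩ = b₂.2.1 ⟨c, hc2⟩)
    (hh : ∀ (c : ℕ × ℕ)
      (hc1 : c ∈ lam.transpose.cells \ (toYoung b₁.1.2).transpose.cells)
      (hc2 : c ∈ lam.transpose.cells \ (toYoung b₂.1.2).transpose.cells),
      b₁.2.2 ⟨c, hc1⟩ = b₂.2.2 ⟨c, hc2⟩) : b₁ = b₂ := by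
  obtain ⟨⟨k₁, p₁⟩, g₁, h₁⟩ := b₁
  obtain ⟨⟨k₂, p₂⟩, g₂, h₂⟩ := b₂
  have hq : (⟨k₁, p₁⟩ : Σ k, Nat.Partition k) = ⟨k₂, p₂⟩ := sigma_partition_ext hparts
  injection hq with hk hp
  subst hk
  have hp' : p₁ = p₂ := eq_of_heq hp
  subst hp'

  refine congrArg _ (Prod.ext ?_ ?_)
  · funext c
    exact hg c.1 c.2 c.2
  · funext c
    exact hh c.1 c.2 c.2

lemma phiF_psiF {q : Σ k, Nat.Partition k} {g} {h}
    (hsub : (toYoung q.2).cells ⊆ lam.cells)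
    (hg : IsSemistandard (toYoung q.2).cells g)
    (hh : IsSemistandard (lam.transpose.cells \ (toYoung q.2).transpose.cells) h) :
    phiF m n lam (psiF_isHook m n lam hg hh) = ⟨q, g, h⟩ := by
  have hμ : muD m n lam (psiF_isHook m n lam hg hh) = toYoung q.2 :=
    muD_psiF m n lam hsub hg hh
  apply bigT_ext
  · show (partitionOf (muD m n lam (psiF_isHook m n lam hg hh))).parts = q.2.parts
    rw [hμ]
    exact parts_partitionOf_toYoung q.2
  · intro c hc1 hc2
    show Sum.getLeft _ _ = g ⟨c, hc2⟩
    rw [Sum.getLeft_eq_iff]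
    exact psiF_eq_inl m n lam _ hc2
  · intro c hc1 hc2
    show Sum.getRight _ _ = h ⟨c, hc2⟩
    rw [Sum.getRight_eq_iff]
    exact psiF_eq_inr m n lam _ ((mem_skew_iff lam).mp hc2).2


lemma bigS_spec {b : BigT m n lam} (hb : b ∈ BigS m n lam) :
    (toYoung b.1.2).cells ⊆ lam.cells ∧ IsSemistandard (toYoung b.1.2).cells b.2.1 ∧
      IsSemistandard (lam.transpose.cells \ (toYoung b.1.2).transpose.cells) b.2.2 := by
  rw [BigS, Finset.mem_sigma, Finset.mem_sigma, Finset.mem_product] at hb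
  exact ⟨(Finset.mem_filter.mp hb.1.2).2, (Finset.mem_filter.mp hb.2.1).2,
    (Finset.mem_filter.mp hb.2.2).2⟩

lemma prod_split {f : {c // c ∈ lam.cells} → Fin m ⊕ Fin n} (hf : IsHookTableau m n lam f) :
    (∏ c, (MvPolynomial.X (f c) : MvPolynomial (Fin m ⊕ Fin n) ℤ)) =
    (∏ c, (MvPolynomial.X (Sum.inl (gOf m n lam hf c)) : MvPolynomial (Fin m ⊕ Fin n) ℤ)) *
    (∏ c, (MvPolynomial.X (Sum.inr (hOf m n lam hf c)) : MvPolynomial (Fin m ⊕ Fin n) ℤ)) := by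
  rw [← Finset.prod_filter_mul_prod_filter_not Finset.univ (fun c => (f c).isLeft)
    (fun c => (MvPolynomial.X (f c) : MvPolynomial (Fin m ⊕ Fin n) ℤ))]
  congr 1
  · refine Finset.prod_bij'
      (i := fun c hc => (⟨c.1, mem_mu_of_mem_barred m n lam hf
        ((mem_barred' m n lam c).mpr (Finset.mem_filter.mp hc).2)⟩ :
        {d // d ∈ (toYoung (partitionOf (muD m n lam hf))).cells}))
      (j := fun d _ => ⟨d.1, barred_subset m n lam f (mem_barred_of_mem_mu m n lam hf d.2)⟩)
      (fun _ _ => Finset.mem_univ _) (fun d hd => ?_) (fun c hc => ?_) (fun d hd => ?_)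
      (fun c hc => ?_)
    · exact Finset.mem_filter.mpr ⟨Finset.mem_univ _,
        isLeft_of_mem_barred m n lam (mem_barred_of_mem_mu m n lam hf d.2) _⟩
    · exact Subtype.ext rfl
    · exact Subtype.ext rfl
    · exact (congrArg MvPolynomial.X (Sum.inl_getLeft (f c) _)).symm
  · refine Finset.prod_bij'
      (i := fun c hc => (⟨c.1.swap, mem_skew_of lam c.2 (fun hmem =>
        (Finset.mem_filter.mp hc).2
          ((mem_barred' m n lam c).mp (mem_barred_of_mem_mu m n lam hf hmem)))⟩ :
        {d // d ∈ lam.transpose.cells \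
          (toYoung (partitionOf (muD m n lam hf))).transpose.cells}))
      (j := fun d _ => ⟨d.1.swap, ((mem_skew_iff lam).mp d.2).1⟩)
      (fun _ _ => Finset.mem_univ _) (fun d hd => ?_) (fun c hc => ?_) (fun d hd => ?_)
      (fun c hc => ?_)
    · refine Finset.mem_filter.mpr ⟨Finset.mem_univ _, ?_⟩
      rw [Sum.not_isLeft]
      exact isRight_of_not_mem_barred m n lam _ (fun hmem =>
        ((mem_skew_iff lam).mp d.2).2 (mem_mu_of_mem_barred m n lam hf hmem))
    · exact Subtype.ext (Prod.swap_swap _)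
    · exact Subtype.ext (Prod.swap_swap _)
    · exact (congrArg MvPolynomial.X (Sum.inr_getRight (f c) _)).symm

lemma rename_genSchur (N : ℕ) (ι : Fin N → Fin m ⊕ Fin n) (cs : Finset (ℕ × ℕ)) :
    MvPolynomial.rename ι (genSchur N cs) =
      ∑ f ∈ Finset.univ.filter (IsSemistandard (N := N) cs),
        ∏ c, (MvPolynomial.X (ι (f c)) : MvPolynomial (Fin m ⊕ Fin n) ℤ) := by
  rw [genSchur, map_sum]
  refine Finset.sum_congr rfl fun f _ => ?_
  rw [map_prod]
  exact Finset.prod_congr rfl fun c _ => MvPolynomial.rename_X _ _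

lemma rhs_eq :
    (∑ k ∈ Finset.range (lam.card + 1),
        ∑ p ∈ (Finset.univ : Finset (Nat.Partition k)).filter
            (fun p => (toYoung p).cells ⊆ lam.cells),
          (MvPolynomial.rename (Sum.inl : Fin m → Fin m ⊕ Fin n)
              (schurPoly m (toYoung p))) *
            (MvPolynomial.rename (Sum.inr : Fin n → Fin m ⊕ Fin n)
              (skewSchur n lam.transpose (toYoung p).transpose))) =
    ∑ b ∈ BigS m n lam,
      (∏ c, (MvPolynomial.X (Sum.inl (b.2.1 c)) : MvPolynomial (Fin m ⊕ Fin n) ℤ)) *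
      (∏ c, (MvPolynomial.X (Sum.inr (b.2.2 c)) : MvPolynomial (Fin m ⊕ Fin n) ℤ)) := by
  have e1 := Finset.sum_sigma' (Finset.range (lam.card + 1))
    (fun k => (Finset.univ : Finset (Nat.Partition k)).filter
      (fun p => (toYoung p).cells ⊆ lam.cells))
    (fun k p => (MvPolynomial.rename (Sum.inl : Fin m → Fin m ⊕ Fin n)
      (schurPoly m (toYoung p))) * (MvPolynomial.rename (Sum.inr : Fin n → Fin m ⊕ Fin n)
      (skewSchur n lam.transpose (toYoung p).transpose)))
  have e2 := Finset.sum_sigma (Finset.sigma (Finset.range (lam.card + 1))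
      (fun k => (Finset.univ : Finset (Nat.Partition k)).filter
        (fun p => (toYoung p).cells ⊆ lam.cells)))
    (fun q => (Finset.univ.filter (IsSemistandard (toYoung q.2).cells)) ×ˢ
      (Finset.univ.filter
        (IsSemistandard (lam.transpose.cells \ (toYoung q.2).transpose.cells))))
    (fun b => (∏ c, (MvPolynomial.X (Sum.inl (b.2.1 c)) : MvPolynomial (Fin m ⊕ Fin n) ℤ)) *
      (∏ c, (MvPolynomial.X (Sum.inr (b.2.2 c)) : MvPolynomial (Fin m ⊕ Fin n) ℤ)))
  rw [e1, BigS, e2]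
  refine Finset.sum_congr rfl fun q _ => ?_
  rw [schurPoly, skewSchur, rename_genSchur, rename_genSchur, Finset.sum_mul_sum,
    ← Finset.sum_product']


theorem statement5' (lam : YoungDiagram) :
    hookSchur m n lam =
      ∑ k ∈ Finset.range (lam.card + 1),
        ∑ p ∈ (Finset.univ : Finset (Nat.Partition k)).filter
            (fun p => (toYoung p).cells ⊆ lam.cells),
          (MvPolynomial.rename (Sum.inl : Fin m → Fin m ⊕ Fin n)
              (schurPoly m (toYoung p))) *
            (MvPolynomial.rename (Sum.inr : Fin n → Fin m ⊕ Fin n)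
              (skewSchur n lam.transpose (toYoung p).transpose)) := by
  rw [rhs_eq, hookSchur]
  refine Finset.sum_bij'
    (i := fun f hf => phiF m n lam (Finset.mem_filter.mp hf).2)
    (j := fun b _ => psiF m n lam b.1 b.2.1 b.2.2)
    (fun f hf => phiF_mem m n lam _) (fun b hb => ?_) (fun f hf => ?_) (fun b hb => ?_)
    (fun f hf => prod_split m n lam _)
  · refine Finset.mem_filter.mpr ⟨Finset.mem_univ _, ?_⟩
    exact psiF_isHook m n lam (bigS_spec m n lam hb).2.1 (bigS_spec m n lam hb).2.2
  · exact psiF_phiF m n lam _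
  · exact phiF_psiF m n lam (bigS_spec m n lam hb).1 (bigS_spec m n lam hb).2.1
      (bigS_spec m n lam hb).2.2


/-- `hs_λ(x; y) = ∑_{μ ⊆ λ} s_μ(x) · s_{λ'/μ'}(y)`, the sum being over all
partitions `μ` contained in `λ` (parametrized by their size `k` and the partition
`p` of `k`), with `λ'`, `μ'` the conjugate partitions. -/
theorem statement5 (m n : ℕ) (lam : YoungDiagram) :
    hookSchur m n lam =
      ∑ k ∈ Finset.range (lam.card + 1),
        ∑ p ∈ (Finset.univ : Finset (Nat.Partition k)).filter
            (fun p => (toYoung p).cells ⊆ lam.cells),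
          (MvPolynomial.rename (Sum.inl : Fin m → Fin m ⊕ Fin n)
              (schurPoly m (toYoung p))) *
            (MvPolynomial.rename (Sum.inr : Fin n → Fin m ⊕ Fin n)
              (skewSchur n lam.transpose (toYoung p).transpose)) :=
  statement5' m n lam

end Stmt5
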